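/- Let c ≥ 0 and let r₂, r₃ be real numbers with r₂² + r₃ > 0. Then ∫₀^∞ y^{-2} e^{-π (c y + r₂ y⁻¹)² - π r₃ y⁻²} dy = (1/2) (r₂² + r₃)^{-1/2} e^{-2π c ((r₂² + r₃)^{1/2} + r₂)}. -/

import Mathlib

open MeasureTheory Real

lemma glasser_integral (s c : ℝ) (hs : 0 < s) (hc : 0 ≤ c) :
    ∫ u in Set.Ioi (0:ℝ), Real.exp (-π * (s * u - c * u⁻¹) ^ 2) = 1 / (2 * s) := by
  rcases hc.eq_or_lt with rfl | hc
  · have h : ∀ u : ℝ, Real.exp (-π * (s * u - 0 * u⁻¹) ^ 2)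
        = Real.exp (-(π * s ^ 2) * u ^ 2) := by
      intro u; congr 1; ring
    simp_rw [h]
    rw [integral_gaussian_Ioi, show π / (π * s ^ 2) = (s⁻¹) ^ 2 by
      field_simp, Real.sqrt_sq (by positivity)]
    field_simp
  -- c > 0 case
  set E : ℝ → ℝ := fun u => Real.exp (-π * (s * u - c * u⁻¹) ^ 2) with hE
  -- derivative facts
  have hφd : ∀ u ∈ Set.Ioi (0:ℝ), HasDerivWithinAt (fun u : ℝ => s * u - c * u⁻¹)
      (s + c * (u ^ 2)⁻¹) (Set.Ioi 0) u := by
    intro u hu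
    have h1 : HasDerivAt (fun u : ℝ => s * u - c * u⁻¹)
        (s * 1 - c * (-(u ^ 2)⁻¹)) u :=
      ((hasDerivAt_id u).const_mul s).sub ((hasDerivAt_inv (ne_of_gt hu)).const_mul c)
    have h2 : s * 1 - c * (-(u ^ 2)⁻¹) = s + c * (u ^ 2)⁻¹ := by ring
    rw [h2] at h1
    exact h1.hasDerivWithinAt
  have hφinj : Set.InjOn (fun u : ℝ => s * u - c * u⁻¹) (Set.Ioi 0) := by
    have : StrictMonoOn (fun u : ℝ => s * u - c * u⁻¹) (Set.Ioi 0) := by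
      intro x hx y hy hxy
      simp only [Set.mem_Ioi] at hx hy
      have h1 : y⁻¹ < x⁻¹ := by
        rw [inv_lt_inv₀ hy hx]; exact hxy
      have h2 : s * x < s * y := by nlinarith
      have h3 : c * y⁻¹ < c * x⁻¹ := by nlinarith
      dsimp only; nlinarith
    exact this.injOn
  have hφimg : (fun u : ℝ => s * u - c * u⁻¹) '' Set.Ioi 0 = Set.univ := by
    apply Set.eq_univ_of_forall
    intro v
    set d : ℝ := Real.sqrt (v ^ 2 + 4 * s * c) with hd
    have hd2 : d ^ 2 = v ^ 2 + 4 * s * c := Real.sq_sqrt (by positivity)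
    have hdv : |v| < d := by
      rw [hd, ← Real.sqrt_sq_eq_abs]
      apply Real.sqrt_lt_sqrt (sq_nonneg v)
      nlinarith
    have hu : 0 < (v + d) / (2 * s) := by
      have : -v ≤ |v| := neg_le_abs v
      apply div_pos (by linarith) (by linarith)
    refine ⟨(v + d) / (2 * s), hu, ?_⟩
    have hvd : (0:ℝ) < v + d := by linarith [neg_le_abs v]
    show s * ((v + d) / (2 * s)) - c * ((v + d) / (2 * s))⁻¹ = v
    field_simp
    linear_combination hd2
  -- first substitution: Gaussian over ℝ
  have key1 := integral_image_eq_integral_abs_deriv_smul (f' := fun u => s + c * (u ^ 2)⁻¹)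
      measurableSet_Ioi hφd hφinj (fun x => Real.exp (-π * x ^ 2))
  rw [hφimg, MeasureTheory.setIntegral_univ, integral_gaussian,
    div_self (ne_of_gt Real.pi_pos), Real.sqrt_one] at key1
  have key1' : (1:ℝ) = ∫ u in Set.Ioi (0:ℝ), (s * E u + (c * (u ^ 2)⁻¹) * E u) := by
    rw [key1]
    apply MeasureTheory.setIntegral_congr_fun measurableSet_Ioi
    intro u hu
    simp only [Set.mem_Ioi] at hu
    have h1 : |s + c * (u ^ 2)⁻¹| = s + c * (u ^ 2)⁻¹ := abs_of_pos (by positivity)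
    dsimp only
    rw [smul_eq_mul, h1, hE]
    ring
  -- second substitution ψ u = (c/s) * u⁻¹
  have hψd : ∀ u ∈ Set.Ioi (0:ℝ), HasDerivWithinAt (fun u : ℝ => (c / s) * u⁻¹)
      ((c / s) * (-(u ^ 2)⁻¹)) (Set.Ioi 0) u := fun u hu =>
    (((hasDerivAt_inv (ne_of_gt hu)).const_mul (c / s))).hasDerivWithinAt
  have hψinj : Set.InjOn (fun u : ℝ => (c / s) * u⁻¹) (Set.Ioi 0) := by
    intro x hx y hy hxy
    have hcs : c / s ≠ 0 := ne_of_gt (div_pos hc hs)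
    have := mul_left_cancel₀ hcs hxy
    exact inv_injective this
  have hψimg : (fun u : ℝ => (c / s) * u⁻¹) '' Set.Ioi 0 = Set.Ioi 0 := by
    ext x
    constructor
    · rintro ⟨y, hy, rfl⟩
      simp only [Set.mem_Ioi] at hy ⊢
      positivity
    · intro hx
      simp only [Set.mem_Ioi] at hx
      refine ⟨(c / s) * x⁻¹, Set.mem_Ioi.mpr (by positivity), ?_⟩
      field_simp
  have key2 := integral_image_eq_integral_abs_deriv_smul
      (f' := fun u => (c / s) * (-(u ^ 2)⁻¹))
      measurableSet_Ioi hψd hψinj (fun x => (c * (x ^ 2)⁻¹) * E x)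
  rw [hψimg] at key2
  have heq2 : ∀ u ∈ Set.Ioi (0:ℝ),
      |(c / s) * (-(u ^ 2)⁻¹)| • ((c * (((c / s) * u⁻¹) ^ 2)⁻¹) * E ((c / s) * u⁻¹))
        = s * E u := by
    intro u hu
    simp only [Set.mem_Ioi] at hu
    have hu0 : u ≠ 0 := ne_of_gt hu
    have harg : s * ((c / s) * u⁻¹) - c * ((c / s) * u⁻¹)⁻¹ = -(s * u - c * u⁻¹) := by
      field_simp
      ring
    have hEeq : E ((c / s) * u⁻¹) = E u := by
      rw [hE]; dsimp only; rw [harg, neg_sq]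
    rw [hEeq, smul_eq_mul, abs_mul, abs_neg, abs_inv, abs_of_pos (div_pos hc hs),
      abs_of_pos (by positivity : (0:ℝ) < u ^ 2)]
    field_simp
  have key2' : (∫ u in Set.Ioi (0:ℝ), (c * (u ^ 2)⁻¹) * E u)
      = ∫ u in Set.Ioi (0:ℝ), s * E u := by
    rw [key2]
    exact MeasureTheory.setIntegral_congr_fun measurableSet_Ioi heq2
  -- integrability
  have hA : IntegrableOn E (Set.Ioi 0) := by
    have hbound : ∀ u ∈ Set.Ioi (0:ℝ),
        ‖E u‖ ≤ Real.exp (2 * π * s * c) * Real.exp (-(π * s ^ 2) * u ^ 2) := by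
      intro u hu
      simp only [Set.mem_Ioi] at hu
      rw [hE, Real.norm_eq_abs, Real.abs_exp, ← Real.exp_add]
      apply Real.exp_le_exp.mpr
      have h1 : u * u⁻¹ = 1 := mul_inv_cancel₀ (ne_of_gt hu)
      have h2 : s ^ 2 * u ^ 2 - 2 * s * c ≤ (s * u - c * u⁻¹) ^ 2 := by
        have e2 : (s * u - c * u⁻¹) ^ 2
            = s ^ 2 * u ^ 2 - 2 * s * c * (u * u⁻¹) + c ^ 2 * (u⁻¹) ^ 2 := by ring
        rw [e2, h1]
        nlinarith [sq_nonneg (c * u⁻¹)]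
      nlinarith [mul_le_mul_of_nonneg_left h2 Real.pi_pos.le]
    apply Integrable.mono' (((integrable_exp_neg_mul_sq (by positivity :
        (0:ℝ) < π * s ^ 2)).const_mul (Real.exp (2 * π * s * c))).restrict (s := Set.Ioi 0))
    · apply Measurable.aestronglyMeasurable
      fun_prop
    · filter_upwards [ae_restrict_mem measurableSet_Ioi] with u hu
      exact hbound u hu
  have hB : IntegrableOn (fun u => (c * (u ^ 2)⁻¹) * E u) (Set.Ioi 0) := by
    have := (integrableOn_image_iff_integrableOn_abs_deriv_smul
      (f' := fun u => (c / s) * (-(u ^ 2)⁻¹))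
      measurableSet_Ioi hψd hψinj (fun x => (c * (x ^ 2)⁻¹) * E x)).symm
    rw [hψimg] at this
    rw [← this]
    exact MeasureTheory.IntegrableOn.congr_fun (hA.const_mul s)
      (fun u hu => (heq2 u hu).symm) measurableSet_Ioi
  -- combine
  have hsplit : (1:ℝ) = s * (∫ u in Set.Ioi (0:ℝ), E u) + s * (∫ u in Set.Ioi (0:ℝ), E u) := by
    rw [key1', integral_add (hA.const_mul s) hB, key2',
      integral_const_mul]
  have : (∫ u in Set.Ioi (0:ℝ), E u) = 1 / (2 * s) := by
    field_simp at hsplit ⊢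
    linarith
  exact this

theorem integral_gaussian_quotient (c r₂ r₃ : ℝ) (hc : 0 ≤ c) (hr : 0 < r₂ ^ 2 + r₃) :
    ∫ y in Set.Ioi (0 : ℝ),
        y⁻¹ ^ 2 * Real.exp (-π * (c * y + r₂ * y⁻¹) ^ 2 - π * r₃ * y⁻¹ ^ 2) =
      (1 / 2) * (Real.sqrt (r₂ ^ 2 + r₃))⁻¹ *
        Real.exp (-2 * π * c * (Real.sqrt (r₂ ^ 2 + r₃) + r₂)) := by
  set s : ℝ := Real.sqrt (r₂ ^ 2 + r₃) with hsdef
  have hs : 0 < s := Real.sqrt_pos.mpr hr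
  have hs2 : s ^ 2 = r₂ ^ 2 + r₃ := Real.sq_sqrt hr.le
  -- substitution y = u⁻¹
  have hinvd : ∀ u ∈ Set.Ioi (0:ℝ), HasDerivWithinAt (fun u : ℝ => u⁻¹)
      (-(u ^ 2)⁻¹) (Set.Ioi 0) u := fun u hu =>
    (hasDerivAt_inv (ne_of_gt hu)).hasDerivWithinAt
  have hinvinj : Set.InjOn (fun u : ℝ => u⁻¹) (Set.Ioi 0) := inv_injective.injOn
  have hinvimg : (fun u : ℝ => u⁻¹) '' Set.Ioi 0 = Set.Ioi 0 := by
    ext x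
    constructor
    · rintro ⟨y, hy, rfl⟩
      simp only [Set.mem_Ioi] at hy ⊢
      positivity
    · intro hx
      simp only [Set.mem_Ioi] at hx
      exact ⟨x⁻¹, Set.mem_Ioi.mpr (by positivity), inv_inv x⟩
  have key := integral_image_eq_integral_abs_deriv_smul (f' := fun u => -(u ^ 2)⁻¹)
      measurableSet_Ioi hinvd hinvinj
      (fun y => y⁻¹ ^ 2 * Real.exp (-π * (c * y + r₂ * y⁻¹) ^ 2 - π * r₃ * y⁻¹ ^ 2))
  rw [hinvimg] at key
  rw [key]
  have heq : ∀ u ∈ Set.Ioi (0:ℝ),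
      |-(u ^ 2)⁻¹| • ((u⁻¹)⁻¹ ^ 2 *
        Real.exp (-π * (c * u⁻¹ + r₂ * (u⁻¹)⁻¹) ^ 2 - π * r₃ * (u⁻¹)⁻¹ ^ 2))
      = Real.exp (-2 * π * c * (s + r₂)) * Real.exp (-π * (s * u - c * u⁻¹) ^ 2) := by
    intro u hu
    simp only [Set.mem_Ioi] at hu
    have hu0 : u ≠ 0 := ne_of_gt hu
    rw [inv_inv, smul_eq_mul, abs_neg, abs_inv, abs_of_pos (pow_pos hu 2)]
    have harg : -π * (c * u⁻¹ + r₂ * u) ^ 2 - π * r₃ * u ^ 2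
        = -2 * π * c * (s + r₂) + -π * (s * u - c * u⁻¹) ^ 2 := by
      have h1 : u * u⁻¹ = 1 := mul_inv_cancel₀ hu0
      have hkey : (c * u⁻¹ + r₂ * u) ^ 2 + r₃ * u ^ 2
          = 2 * c * (s + r₂) + (s * u - c * u⁻¹) ^ 2 := by
        have e1 : (c * u⁻¹ + r₂ * u) ^ 2
            = c ^ 2 * (u⁻¹) ^ 2 + 2 * c * r₂ * (u * u⁻¹) + r₂ ^ 2 * u ^ 2 := by ring
        have e2 : (s * u - c * u⁻¹) ^ 2
            = s ^ 2 * u ^ 2 - 2 * s * c * (u * u⁻¹) + c ^ 2 * (u⁻¹) ^ 2 := by ring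
        rw [e1, e2, h1, hs2]
        ring
      linear_combination (-π) * hkey
    rw [harg, Real.exp_add]
    field_simp
  rw [MeasureTheory.setIntegral_congr_fun measurableSet_Ioi heq,
    integral_const_mul, glasser_integral s c hs hc]
  field_simp
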